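/- Let n ≥ 2, k ∈ [2,n]∩ℕ, Φ a Young function, φ ∈ G₁^dec, and a₀,…,a_{k−1} > 0. Then the cube-based Orlicz–Morrey functional of the characteristic function of ∏_{j=0}^{k−1}[0,a_j]×ℝ^{n−k} satisfies sup_{b∈ℝⁿ,R>0}(1/φ(R))‖χ_{∏_{j=0}^{k−1}[0,a_j]×ℝ^{n−k}}‖_{Φ,Q(b,R/2)} = sup_{R>0}(1/φ(R))·[Φ⁻¹(R^k/∏_{j=0}^{k−1}min(a_j,R))]^{−1}. -/

import Mathlib

open MeasureTheory Filter Set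
open scoped ENNReal NNReal

noncomputable section

/-- A Young function: convex on `[0,∞)`, vanishing at `0`, nonnegative, tending to `∞`. -/
def IsYoung (Φ : ℝ → ℝ) : Prop :=
  ConvexOn ℝ (Set.Ici 0) Φ ∧ Φ 0 = 0 ∧ (∀ t, 0 ≤ t → 0 ≤ Φ t) ∧
    Filter.Tendsto Φ Filter.atTop Filter.atTop

/-- Almost decreasing on `(0,∞)`: `g s ≤ C * g r` whenever `0 < r < s`. -/
def AlmostDecreasingOn (g : ℝ → ℝ) : Prop :=
  ∃ C > 0, ∀ r s : ℝ, 0 < r → r < s → g s ≤ C * g r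

/-- Almost increasing on `(0,∞)`: `g r ≤ C * g s` whenever `0 < r < s`. -/
def AlmostIncreasingOn (g : ℝ → ℝ) : Prop :=
  ∃ C > 0, ∀ r s : ℝ, 0 < r → r < s → g r ≤ C * g s

/-- The class `G₁^dec`: positive, almost decreasing and submultiplicative on `(0,∞)`. -/
def G1dec (φ : ℝ → ℝ) : Prop :=
  (∀ r : ℝ, 0 < r → 0 < φ r) ∧ AlmostDecreasingOn φ ∧
    ∃ C > 0, ∀ r s : ℝ, 0 < r → 0 < s → φ (r * s) ≤ C * φ r * φ s

/-- The class `G₂^dec`: `φ ∈ G₀ ∩ G₁^dec` and `φ(1/r) ≤ C/φ(r)`. -/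
def G2dec (φ : ℝ → ℝ) : Prop :=
  G1dec φ ∧ Filter.Tendsto φ (nhdsWithin 0 (Set.Ioi 0)) Filter.atTop ∧
    Filter.Tendsto φ Filter.atTop (nhds 0) ∧
    ∃ C > 0, ∀ r : ℝ, 0 < r → φ r⁻¹ ≤ C / φ r

/-- Generalized inverse of a Young function: `Φ⁻¹(u) = inf {t ≥ 0 : Φ(t) > u}`. -/
def yInv (Φ : ℝ → ℝ) (u : ℝ) : ℝ := sInf {t : ℝ | 0 ≤ t ∧ u < Φ t}

/-- The closed cube `Q(b,r) = {x : max_i |x_i − b_i| ≤ r}` in `ℝⁿ`. -/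
def cube {n : ℕ} (b : EuclideanSpace ℝ (Fin n)) (r : ℝ) : Set (EuclideanSpace ℝ (Fin n)) :=
  {x | ∀ i, |x i - b i| ≤ r}

/-- The Luxemburg-type norm of `f` on the cube `Q(b,r)`. -/
def cubeLux {n : ℕ} (Φ : ℝ → ℝ) (b : EuclideanSpace ℝ (Fin n)) (r : ℝ)
    (f : EuclideanSpace ℝ (Fin n) → ℝ) : ℝ≥0∞ :=
  sInf {lam : ℝ≥0∞ | ∃ l : ℝ, 0 < l ∧ lam = ENNReal.ofReal l ∧
    (∫ x in cube b r, Φ (|f x| / l)) ≤ (volume (cube b r)).toReal}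

end

/-! ### Auxiliary lemmas on Young functions and their generalized inverses -/

section ylem
variable {Φ : ℝ → ℝ} (hΦ : IsYoung Φ)
include hΦ

lemma young_scale {t : ℝ} (h0 : 0 ≤ t) (h1 : t ≤ 1) : Φ t ≤ t * Φ 1 := by
  have := hΦ.1.2 (mem_Ici.2 (le_refl (0:ℝ))) (mem_Ici.2 (zero_le_one))
    (by linarith : (0:ℝ) ≤ 1 - t) h0 (by ring)
  simpa [hΦ.2.1, smul_eq_mul] using this

lemma young_mono : MonotoneOn Φ (Set.Ici 0) := by
  intro s hs t ht hst
  rcases eq_or_lt_of_le hst with rfl | h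
  · exact le_refl _
  have ht' : 0 < t := lt_of_le_of_lt hs h
  have hst' : s/t ≤ 1 := by rw [div_le_one ht']; exact hst
  have := hΦ.1.2 (mem_Ici.2 (le_refl (0:ℝ))) (mem_Ici.2 (le_of_lt ht'))
    (by linarith : (0:ℝ) ≤ 1 - s/t) (div_nonneg hs (le_of_lt ht')) (by ring)
  have hΦt : 0 ≤ Φ t := hΦ.2.2.1 t (le_of_lt ht')
  calc Φ s = Φ ((1 - s/t) • (0:ℝ) + (s/t) • t) := by
        congr 1; rw [smul_zero, zero_add, smul_eq_mul, div_mul_cancel₀ s (ne_of_gt ht')]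
    _ ≤ (1 - s/t) * Φ 0 + (s/t) * Φ t := this
    _ = (s/t) * Φ t := by rw [hΦ.2.1]; ring
    _ ≤ Φ t := by nlinarith

lemma ySet_nonempty (u : ℝ) : {t : ℝ | 0 ≤ t ∧ u < Φ t}.Nonempty := by
  have := hΦ.2.2.2.eventually (eventually_gt_atTop u)
  rcases (this.and (eventually_ge_atTop (0:ℝ))).exists with ⟨t, h1, h2⟩
  exact ⟨t, h2, h1⟩

omit hΦ in
lemma ySet_bdd (u : ℝ) : BddBelow {t : ℝ | 0 ≤ t ∧ u < Φ t} :=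
  ⟨0, fun _ ht => ht.1⟩

lemma yInv_nonneg (u : ℝ) : 0 ≤ yInv Φ u :=
  le_csInf (ySet_nonempty hΦ u) (fun _ ht => ht.1)

lemma yInv_pos {u : ℝ} (hu : 0 < u) : 0 < yInv Φ u := by
  set t₀ : ℝ := min 1 (u / (Φ 1 + 1)) with ht₀
  have hΦ1 : 0 ≤ Φ 1 := hΦ.2.2.1 1 zero_le_one
  have ht₀pos : 0 < t₀ := lt_min one_pos (by positivity)
  refine lt_of_lt_of_le ht₀pos (le_csInf (ySet_nonempty hΦ u) ?_)
  rintro t ⟨ht0, htu⟩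
  by_contra hlt
  push_neg at hlt
  have h1 : t ≤ 1 := le_of_lt (lt_of_lt_of_le hlt (min_le_left _ _))
  have h2 : Φ t ≤ t * Φ 1 := young_scale hΦ ht0 h1
  have h3 : t * Φ 1 ≤ (u / (Φ 1 + 1)) * Φ 1 := by
    have := le_of_lt (lt_of_lt_of_le hlt (min_le_right _ _))
    nlinarith
  have h4 : (u / (Φ 1 + 1)) * Φ 1 ≤ u := by
    rw [div_mul_eq_mul_div, div_le_iff₀ (by linarith)]
    nlinarith
  linarith

lemma yInv_lt_mem {u t : ℝ} (ht : yInv Φ u < t) : ∃ s, 0 ≤ s ∧ u < Φ s ∧ s < t :=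
  let ⟨s, hs, hst⟩ := exists_lt_of_csInf_lt (ySet_nonempty hΦ u) ht
  ⟨s, hs.1, hs.2, hst⟩

/-- If `Φ t ≤ u` then `t ≤ yInv u`. -/
lemma le_yInv {u t : ℝ} (ht0 : 0 ≤ t) (h : Φ t ≤ u) : t ≤ yInv Φ u := by
  by_contra hlt
  push_neg at hlt
  obtain ⟨s, hs0, hsu, hst⟩ := yInv_lt_mem hΦ hlt
  have := young_mono hΦ (mem_Ici.2 hs0) (mem_Ici.2 ht0) (le_of_lt hst)
  linarith

omit hΦ in
/-- If `0 ≤ t < yInv u` then `Φ t ≤ u`. -/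
lemma phi_le_of_lt_yInv {u t : ℝ} (ht0 : 0 ≤ t) (h : t < yInv Φ u) : Φ t ≤ u := by
  by_contra hgt
  push_neg at hgt
  exact absurd (csInf_le (ySet_bdd (Φ := Φ) u) ⟨ht0, hgt⟩) (not_le.2 h)

lemma yInv_mono : Monotone (yInv Φ) := fun u v huv =>
  csInf_le_csInf (ySet_bdd (Φ := Φ) u) (ySet_nonempty hΦ v)
    (fun _ ht => ⟨ht.1, lt_of_le_of_lt huv ht.2⟩)

end ylem

/-! ### Evaluating the Luxemburg infimum -/

lemma sInf_zero_of_all (V' : ℝ) (hV : 0 ≤ V') (P : ℝ → Prop) (hP : ∀ l, 0 < l → P l) :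
    sInf {lam : ℝ≥0∞ | ∃ l : ℝ, 0 < l ∧ lam = ENNReal.ofReal l ∧ P l} = 0 := by
  refine le_antisymm ?_ zero_le
  refine ENNReal.le_of_forall_pos_le_add (fun ε hε _ => ?_)
  have hε' : (0:ℝ) < (ε:ℝ) := hε
  have hmem : ENNReal.ofReal (ε:ℝ) ∈
      {lam : ℝ≥0∞ | ∃ l : ℝ, 0 < l ∧ lam = ENNReal.ofReal l ∧ P l} := ⟨(ε:ℝ), hε', rfl, hP _ hε'⟩
  refine le_trans (sInf_le hmem) ?_
  simp [ENNReal.ofReal_coe_nnreal]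

lemma lux_sInf_eval {Φ : ℝ → ℝ} (hΦ : IsYoung Φ) {m' V' : ℝ} (hm : 0 < m') (hmV : m' ≤ V') :
    sInf {lam : ℝ≥0∞ | ∃ l : ℝ, 0 < l ∧ lam = ENNReal.ofReal l ∧ m' * Φ (1 / l) ≤ V'}
      = ENNReal.ofReal (yInv Φ (V' / m'))⁻¹ := by
  set u : ℝ := V' / m' with hu
  have hu0 : 0 < u := div_pos (lt_of_lt_of_le hm hmV) hm
  set τ : ℝ := yInv Φ u with hτ
  have hτ0 : 0 < τ := yInv_pos hΦ hu0
  have key : ∀ l : ℝ, 0 < l → (m' * Φ (1 / l) ≤ V' ↔ Φ (1/l) ≤ u) := by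
    intro l hl
    rw [hu, le_div_iff₀ hm, mul_comm]
  apply ge_antisymm
  · refine le_sInf ?_
    rintro lam ⟨l, hl, rfl, hcond⟩
    have h1 : Φ (1/l) ≤ u := (key l hl).1 hcond
    have h2 : 1/l ≤ τ := le_yInv hΦ (by positivity) h1
    have h3 : τ⁻¹ ≤ l := by
      rw [inv_le_comm₀ hτ0 hl]
      simpa [one_div] using h2
    exact ENNReal.ofReal_le_ofReal h3
  · refine ENNReal.le_of_forall_pos_le_add (fun ε hε _ => ?_)
    have hε' : (0:ℝ) < ε := hε
    have hmem : ENNReal.ofReal (τ⁻¹ + ε) ∈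
        {lam : ℝ≥0∞ | ∃ l : ℝ, 0 < l ∧ lam = ENNReal.ofReal l ∧ m' * Φ (1 / l) ≤ V'} := by
      refine ⟨τ⁻¹ + ε, by positivity, rfl, ?_⟩
      rw [key _ (by positivity)]
      refine phi_le_of_lt_yInv (by positivity) ?_
      rw [one_div, ← hτ]
      have : τ⁻¹ < τ⁻¹ + ε := by linarith
      calc (τ⁻¹ + (ε:ℝ))⁻¹ < (τ⁻¹)⁻¹ := by
            apply inv_strictAnti₀ (by positivity) this
        _ = τ := inv_inv τ
    refine le_trans (sInf_le hmem) ?_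
    rw [ENNReal.ofReal_add (by positivity) (le_of_lt hε')]
    simp [ENNReal.ofReal_coe_nnreal]

/-! ### Geometry of cubes in Euclidean space -/

section geo
variable {n : ℕ}

lemma coord_preimage (s : Fin n → Set ℝ) :
    (MeasurableEquiv.toLp 2 (Fin n → ℝ)).symm ⁻¹' (Set.univ.pi s)
      = {x : EuclideanSpace ℝ (Fin n) | ∀ i, x i ∈ s i} := by
  ext x; simp [MeasurableEquiv.toLp, Set.mem_pi]; rfl

lemma coord_volume (s : Fin n → Set ℝ) (hs : ∀ i, MeasurableSet (s i)) :
    volume {x : EuclideanSpace ℝ (Fin n) | ∀ i, x i ∈ s i} = ∏ i, volume (s i) := by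
  have h := (EuclideanSpace.volume_preserving_symm_measurableEquiv_toLp (Fin n)).measure_preimage
    (MeasurableSet.univ_pi hs).nullMeasurableSet
  rw [coord_preimage] at h
  rw [h, volume_pi_pi]

lemma coord_measurable (s : Fin n → Set ℝ) (hs : ∀ i, MeasurableSet (s i)) :
    MeasurableSet {x : EuclideanSpace ℝ (Fin n) | ∀ i, x i ∈ s i} := by
  rw [← coord_preimage]
  exact (MeasurableEquiv.toLp 2 (Fin n → ℝ)).symm.measurable (MeasurableSet.univ_pi hs)

lemma coord_inter (s t : Fin n → Set ℝ) :
    {x : EuclideanSpace ℝ (Fin n) | ∀ i, x i ∈ s i} ∩ {x | ∀ i, x i ∈ t i}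
      = {x | ∀ i, x i ∈ s i ∩ t i} := by
  ext x; simp [forall_and]

lemma cube_eq (b : EuclideanSpace ℝ (Fin n)) (r : ℝ) :
    cube b r = {x : EuclideanSpace ℝ (Fin n) | ∀ i, x i ∈ Set.Icc (b i - r) (b i + r)} := by
  ext x
  simp only [cube, Set.mem_setOf_eq, Set.mem_Icc, abs_le]
  exact forall_congr' fun i => by constructor <;> rintro ⟨h1, h2⟩ <;> constructor <;> linarith

lemma volume_cube (b : EuclideanSpace ℝ (Fin n)) {r : ℝ} (hr : 0 ≤ r) :
    volume (cube b r) = ENNReal.ofReal ((2*r) ^ n) := by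
  rw [cube_eq, coord_volume _ (fun i => measurableSet_Icc)]
  have : ∀ i : Fin n, volume (Set.Icc (b i - r) (b i + r)) = ENNReal.ofReal (2*r) := by
    intro i; rw [Real.volume_Icc]; congr 1; ring
  rw [Finset.prod_congr rfl (fun i _ => this i), Finset.prod_const, Finset.card_univ,
    Fintype.card_fin, ← ENNReal.ofReal_pow (by linarith)]
end geo

lemma card_filter_lt {n k : ℕ} (hkn : k ≤ n) :
    (Finset.univ.filter (fun i : Fin n => (i : ℕ) < k)).card = k := by
  have : (Finset.univ.filter (fun i : Fin n => (i : ℕ) < k))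
      = Finset.map (Fin.castLEEmb hkn) Finset.univ := by
    ext i
    simp only [Finset.mem_filter, Finset.mem_map, Finset.mem_univ, true_and, Fin.castLEEmb]
    constructor
    · intro h; exact ⟨⟨i, h⟩, by simp [Fin.castLE]⟩
    · rintro ⟨j, hj⟩; rw [← hj]; exact j.2
  rw [this, Finset.card_map, Finset.card_univ, Fintype.card_fin]

/-! ### `cubeLux` of an indicator -/

lemma integral_indicator_cube {n : ℕ} {Φ : ℝ → ℝ} (hΦ : IsYoung Φ)
    (E : Set (EuclideanSpace ℝ (Fin n))) (hE : MeasurableSet E)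
    (b : EuclideanSpace ℝ (Fin n)) (r l : ℝ) :
    (∫ x in cube b r, Φ (|E.indicator (fun _ => (1:ℝ)) x| / l))
      = (volume (cube b r ∩ E)).toReal * Φ (1/l) := by
  have hfun : (fun x => Φ (|E.indicator (fun _ => (1:ℝ)) x| / l))
      = E.indicator (fun _ => Φ (1/l)) := by
    funext x
    by_cases hx : x ∈ E
    · simp [Set.indicator_of_mem hx]
    · simp [Set.indicator_of_notMem hx, hΦ.2.1]
  rw [hfun, setIntegral_indicator hE, setIntegral_const, smul_eq_mul, measureReal_def]

lemma cubeLux_indicator {n : ℕ} {Φ : ℝ → ℝ} (hΦ : IsYoung Φ)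
    (E : Set (EuclideanSpace ℝ (Fin n))) (hE : MeasurableSet E)
    (b : EuclideanSpace ℝ (Fin n)) {r : ℝ} (hr : 0 < r) :
    cubeLux Φ b r (E.indicator (fun _ => (1:ℝ)))
      = if volume (cube b r ∩ E) = 0 then 0
        else ENNReal.ofReal
          (yInv Φ ((volume (cube b r)).toReal / (volume (cube b r ∩ E)).toReal))⁻¹ := by
  have hVfin : volume (cube b r) ≠ ⊤ := by
    rw [volume_cube b (le_of_lt hr)]; exact ENNReal.ofReal_ne_top
  have hsub : volume (cube b r ∩ E) ≤ volume (cube b r) :=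
    measure_mono Set.inter_subset_left
  have hmfin : volume (cube b r ∩ E) ≠ ⊤ := fun h => hVfin (top_le_iff.1 (h ▸ hsub))
  have hset : {lam : ℝ≥0∞ | ∃ l : ℝ, 0 < l ∧ lam = ENNReal.ofReal l ∧
      (∫ x in cube b r, Φ (|E.indicator (fun _ => (1:ℝ)) x| / l)) ≤ (volume (cube b r)).toReal}
      = {lam : ℝ≥0∞ | ∃ l : ℝ, 0 < l ∧ lam = ENNReal.ofReal l ∧
        (volume (cube b r ∩ E)).toReal * Φ (1/l) ≤ (volume (cube b r)).toReal} := by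
    ext lam
    exact exists_congr fun l => and_congr_right fun hl => and_congr_right fun _ => by
      rw [integral_indicator_cube hΦ E hE b r l]
  rw [cubeLux, hset]
  split_ifs with h
  · refine sInf_zero_of_all (volume (cube b r)).toReal ENNReal.toReal_nonneg _ (fun l hl => ?_)
    rw [h]
    simp [ENNReal.toReal_nonneg]
  · exact lux_sInf_eval hΦ (ENNReal.toReal_pos h hmfin) (ENNReal.toReal_mono hVfin hsub)

/-! ### The per-radius supremum -/

lemma perR {n k : ℕ} (hkn : k ≤ n) {Φ : ℝ → ℝ} (hΦ : IsYoung Φ)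
    (a : Fin n → ℝ) (ha : ∀ j : Fin n, (j : ℕ) < k → 0 < a j) {R : ℝ} (hR : 0 < R) :
    (⨆ b : EuclideanSpace ℝ (Fin n), cubeLux Φ b (R/2)
        (Set.indicator {x : EuclideanSpace ℝ (Fin n) |
            ∀ j : Fin n, (j : ℕ) < k → x j ∈ Set.Icc 0 (a j)} (fun _ => (1:ℝ))))
      = ENNReal.ofReal (yInv Φ (R ^ k /
          ∏ j ∈ Finset.univ.filter (fun j : Fin n => (j : ℕ) < k), min (a j) R))⁻¹ := by
  set E : Set (EuclideanSpace ℝ (Fin n)) :=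
    {x | ∀ j : Fin n, (j : ℕ) < k → x j ∈ Set.Icc 0 (a j)} with hEdef
  set sE : Fin n → Set ℝ := fun i => if (i : ℕ) < k then Set.Icc 0 (a i) else Set.univ with hsE
  have hsEm : ∀ i, MeasurableSet (sE i) := by
    intro i; rw [hsE]; dsimp only; split_ifs
    · exact measurableSet_Icc
    · exact MeasurableSet.univ
  have hEeq : E = {x : EuclideanSpace ℝ (Fin n) | ∀ i, x i ∈ sE i} := by
    ext x
    simp only [hEdef, Set.mem_setOf_eq, hsE]
    constructor
    · intro h i
      split_ifs with hik
      · exact h i hik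
      · exact Set.mem_univ _
    · intro h j hj
      have := h j
      rwa [if_pos hj] at this
  have hE : MeasurableSet E := hEeq ▸ coord_measurable sE hsEm
  set P : ℝ := ∏ j ∈ Finset.univ.filter (fun j : Fin n => (j : ℕ) < k), min (a j) R with hP
  have hPpos : 0 < P := Finset.prod_pos fun j hj =>
    lt_min (ha j (Finset.mem_filter.1 hj).2) hR
  set c : Fin n → ℝ := fun i => if (i : ℕ) < k then min (a i) R else R with hc
  have hcpos : ∀ i, 0 < c i := by
    intro i; rw [hc]; dsimp only; split_ifs with hik
    · exact lt_min (ha i hik) hR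
    · exact hR
  have hprodc : ∏ i, c i = P * R ^ (n - k) := by
    rw [hc, Finset.prod_ite, Finset.prod_const, hP]
    congr 2
    have h1 := Finset.card_filter_add_card_filter_not
      (s := (Finset.univ : Finset (Fin n))) (p := fun i : Fin n => (i : ℕ) < k)
    rw [card_filter_lt hkn] at h1
    simp only [Finset.card_univ, Fintype.card_fin] at h1
    omega
  have hprodcpos : 0 < ∏ i, c i := Finset.prod_pos fun i _ => hcpos i
  have hRn : R ^ n / (P * R ^ (n - k)) = R ^ k / P := by
    have hpow : R ^ n = R ^ k * R ^ (n - k) := by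
      rw [← pow_add]; congr 1; omega
    rw [hpow, mul_comm P (R ^ (n - k)), ← div_div, mul_div_assoc,
      div_self (by positivity : R ^ (n - k) ≠ (0:ℝ)), mul_one]
  have hV : ∀ b : EuclideanSpace ℝ (Fin n),
      volume (cube b (R/2)) = ENNReal.ofReal (R ^ n) := by
    intro b
    rw [volume_cube b (by linarith : (0:ℝ) ≤ R/2)]
    congr 1
    rw [show 2 * (R/2) = R by ring]
  have hkey : ∀ b : EuclideanSpace ℝ (Fin n),
      cube b (R/2) ∩ E = {x : EuclideanSpace ℝ (Fin n) |
        ∀ i, x i ∈ Set.Icc (b i - R/2) (b i + R/2) ∩ sE i} := by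
    intro b; rw [cube_eq, hEeq, coord_inter]
  have hmeas : ∀ (b : EuclideanSpace ℝ (Fin n)) (i : Fin n),
      MeasurableSet (Set.Icc (b i - R/2) (b i + R/2) ∩ sE i) :=
    fun b i => measurableSet_Icc.inter (hsEm i)
  have hmle : ∀ b : EuclideanSpace ℝ (Fin n),
      volume (cube b (R/2) ∩ E) ≤ ENNReal.ofReal (∏ i, c i) := by
    intro b
    rw [hkey b, coord_volume _ (hmeas b),
      ENNReal.ofReal_prod_of_nonneg (fun i _ => le_of_lt (hcpos i))]
    refine Finset.prod_le_prod' ?_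
    intro i _
    rw [hsE, hc]; dsimp only
    by_cases hik : (i : ℕ) < k
    · rw [if_pos hik, if_pos hik, Set.Icc_inter_Icc, Real.volume_Icc]
      apply ENNReal.ofReal_le_ofReal
      have f1 : (b i + R/2) ⊓ a i ≤ a i := inf_le_right
      have f2 : (b i + R/2) ⊓ a i ≤ b i + R/2 := inf_le_left
      have f3 : (0:ℝ) ≤ (b i - R/2) ⊔ 0 := le_sup_right
      have f4 : b i - R/2 ≤ (b i - R/2) ⊔ 0 := le_sup_left
      refine le_min ?_ ?_ <;> linarith
    · rw [if_neg hik, if_neg hik, Set.inter_univ, Real.volume_Icc]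
      apply ENNReal.ofReal_le_ofReal
      exact le_of_eq (by ring)
  set uStar : ℝ := R ^ k / P with huS
  have huStar : 0 < uStar := div_pos (pow_pos hR k) hPpos
  apply le_antisymm
  · refine iSup_le fun b => ?_
    rw [cubeLux_indicator hΦ E hE b (by linarith : (0:ℝ) < R/2)]
    split_ifs with h
    · exact zero_le
    · apply ENNReal.ofReal_le_ofReal
      have hmfin : volume (cube b (R/2) ∩ E) ≠ ⊤ :=
        fun htop => ENNReal.ofReal_ne_top (top_le_iff.1 (htop ▸ hmle b))
      have hm0 : 0 < (volume (cube b (R/2) ∩ E)).toReal := ENNReal.toReal_pos h hmfin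
      have hmle' : (volume (cube b (R/2) ∩ E)).toReal ≤ ∏ i, c i := by
        have := ENNReal.toReal_mono ENNReal.ofReal_ne_top (hmle b)
        rwa [ENNReal.toReal_ofReal (le_of_lt hprodcpos)] at this
      have hdiv : uStar ≤
          (volume (cube b (R/2))).toReal / (volume (cube b (R/2) ∩ E)).toReal := by
        rw [hV b, ENNReal.toReal_ofReal (by positivity : (0:ℝ) ≤ R ^ n)]
        calc uStar = R ^ n / (P * R ^ (n - k)) := hRn.symm
          _ = R ^ n / (∏ i, c i) := by rw [hprodc]
          _ ≤ R ^ n / (volume (cube b (R/2) ∩ E)).toReal := by gcongr <;> positivity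
      have h1 : yInv Φ uStar ≤ yInv Φ
          ((volume (cube b (R/2))).toReal / (volume (cube b (R/2) ∩ E)).toReal) :=
        yInv_mono hΦ hdiv
      have h2 : 0 < yInv Φ uStar := yInv_pos hΦ huStar
      exact inv_anti₀ h2 h1
  · set bs : EuclideanSpace ℝ (Fin n) :=
      WithLp.toLp 2 (fun i : Fin n => if (i : ℕ) < k then min (a i) R / 2 else 0) with hbs
    have hbsi : ∀ i : Fin n, (i : ℕ) < k → bs i = min (a i) R / 2 := by
      intro i hik; rw [hbs]; dsimp only; rw [if_pos hik]
    have hbsi' : ∀ i : Fin n, ¬ (i : ℕ) < k → bs i = 0 := by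
      intro i hik; rw [hbs]; dsimp only; rw [if_neg hik]
    have hvol_i : ∀ i : Fin n,
        volume (Set.Icc (bs i - R/2) (bs i + R/2) ∩ sE i) = ENNReal.ofReal (c i) := by
      intro i
      rw [hsE, hc]; dsimp only
      by_cases hik : (i : ℕ) < k
      · rw [if_pos hik, if_pos hik, Set.Icc_inter_Icc, Real.volume_Icc]
        have hmin : min (a i) R ≤ R := min_le_right _ _
        have hminpos : 0 < min (a i) R := lt_min (ha i hik) hR
        have h1 : (bs i - R/2) ⊔ 0 = 0 := sup_eq_right.2 (by rw [hbsi i hik]; linarith)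
        have h2 : (bs i + R/2) ⊓ a i = min (a i) R := by
          rw [hbsi i hik]
          rcases le_total (a i) R with hle | hle
          · rw [min_eq_left hle]
            exact inf_eq_right.2 (by linarith)
          · rw [min_eq_right hle]
            rw [show R/2 + R/2 = R by ring]
            exact inf_eq_left.2 hle
        rw [h1, h2, sub_zero]
      · rw [if_neg hik, if_neg hik, Set.inter_univ, Real.volume_Icc]
        congr 1; ring
    have hm_bs : volume (cube bs (R/2) ∩ E) = ENNReal.ofReal (∏ i, c i) := by
      rw [hkey bs, coord_volume _ (hmeas bs), Finset.prod_congr rfl (fun i _ => hvol_i i),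
        ← ENNReal.ofReal_prod_of_nonneg (fun i _ => le_of_lt (hcpos i))]
    refine le_trans (le_of_eq ?_) (le_iSup _ bs)
    rw [cubeLux_indicator hΦ E hE bs (by linarith : (0:ℝ) < R/2), if_neg, hm_bs, hV bs,
      ENNReal.toReal_ofReal (by positivity : (0:ℝ) ≤ R ^ n),
      ENNReal.toReal_ofReal (le_of_lt hprodcpos), hprodc, hRn]
    rw [hm_bs]
    simp [ENNReal.ofReal_eq_zero, not_le, hprodcpos]

/-- For `n ≥ 2`, `k ∈ [2,n]`, `Φ` Young, `φ ∈ G₁^dec` and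
`a₀,…,a_{k−1} > 0`, the cube-based Orlicz–Morrey functional of
`χ_{∏_{j<k}[0,a_j] × ℝ^{n−k}}` equals
`sup_{R>0} (1/φ(R)) [Φ⁻¹(R^k / ∏_{j<k} min(a_j,R))]⁻¹`. -/
theorem statement15 {n k : ℕ} (hn : 2 ≤ n) (hk2 : 2 ≤ k) (hkn : k ≤ n)
    (Φ φ : ℝ → ℝ) (hΦ : IsYoung Φ) (hφ : G1dec φ)
    (a : Fin n → ℝ) (ha : ∀ j : Fin n, (j : ℕ) < k → 0 < a j) :
    (⨆ (b : EuclideanSpace ℝ (Fin n)) (R : ℝ) (_ : 0 < R),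
        (ENNReal.ofReal (φ R))⁻¹ * cubeLux Φ b (R / 2)
          (Set.indicator {x : EuclideanSpace ℝ (Fin n) |
              ∀ j : Fin n, (j : ℕ) < k → x j ∈ Set.Icc 0 (a j)} (fun _ => (1 : ℝ)))) =
      ⨆ (R : ℝ) (_ : 0 < R),
        ENNReal.ofReal ((φ R)⁻¹ *
          (yInv Φ (R ^ k /
            ∏ j ∈ Finset.univ.filter (fun j : Fin n => (j : ℕ) < k), min (a j) R))⁻¹) := by
  rw [iSup_comm]
  refine iSup_congr fun R => ?_
  rw [iSup_comm]
  refine iSup_congr fun hR => ?_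
  have hφR : 0 < φ R := hφ.1 R hR
  calc (⨆ b : EuclideanSpace ℝ (Fin n), (ENNReal.ofReal (φ R))⁻¹ * cubeLux Φ b (R / 2)
          (Set.indicator {x : EuclideanSpace ℝ (Fin n) |
              ∀ j : Fin n, (j : ℕ) < k → x j ∈ Set.Icc 0 (a j)} (fun _ => (1 : ℝ))))
      = (ENNReal.ofReal (φ R))⁻¹ * ⨆ b : EuclideanSpace ℝ (Fin n), cubeLux Φ b (R / 2)
          (Set.indicator {x : EuclideanSpace ℝ (Fin n) |
              ∀ j : Fin n, (j : ℕ) < k → x j ∈ Set.Icc 0 (a j)} (fun _ => (1 : ℝ))) :=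
        (ENNReal.mul_iSup _ _).symm
    _ = (ENNReal.ofReal (φ R))⁻¹ * ENNReal.ofReal (yInv Φ (R ^ k /
            ∏ j ∈ Finset.univ.filter (fun j : Fin n => (j : ℕ) < k), min (a j) R))⁻¹ := by
        rw [perR hkn hΦ a ha hR]
    _ = ENNReal.ofReal ((φ R)⁻¹ *
          (yInv Φ (R ^ k /
            ∏ j ∈ Finset.univ.filter (fun j : Fin n => (j : ℕ) < k), min (a j) R))⁻¹) := by
        rw [ENNReal.ofReal_mul (inv_nonneg.2 (le_of_lt hφR)),
          ENNReal.ofReal_inv_of_pos hφR]
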